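/- arXiv:1307.7271 — 8 statements merged into one kernel-verified Lean document; each statement's English description precedes it below -/
import Mathlib

section
/- Let n ≥ 3 be an integer, let π = (π_2,…,π_n) be a probability vector on {2,…,n}, and let i be an integer with 2 < i < n. Set x = ((n−i)/(n−2))·π_i and define π' by π'_2 = π_2 + x, π'_i = 0, π'_n = π_n + π_i − x, and π'_l = π_l for all other l. Then: (a) π' is again a probability vector on {2,…,n}; (b) π' has the same mean as π, i.e., Σ_{l=2}^n l·π'_l = Σ_{l=2}^n l·π_l; and (c) the objective does not decrease: Σ_{l=2}^n π'_l/l ≥ Σ_{l=2}^n π_l/l, i.e., (1/2)π_2 + (1/i)π_i + (1/n)π_n ≤ (1/2)(π_2 + x) + (1/n)(π_n + π_i − x). -/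
/-- the mean-preserving redistribution of an interior atom `π_i`
(`2 < i < n`) to the two extremes `2` and `n` yields again a probability vector,
preserves the mean, and does not decrease `E[1/N] = ∑ π_l / l`. -/
theorem stmt3 (n : ℕ) (hn : 3 ≤ n)
    (π : ℕ → ℝ) (hπ0 : ∀ l ∈ Finset.Icc 2 n, 0 ≤ π l)
    (hπ1 : ∑ l ∈ Finset.Icc 2 n, π l = 1)
    (i : ℕ) (hi2 : 2 < i) (hin : i < n) :
    let x : ℝ := (((n : ℝ) - (i : ℝ)) / ((n : ℝ) - 2)) * π i
    let π' : ℕ → ℝ := fun l =>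
      if l = 2 then π 2 + x else if l = i then 0 else
        if l = n then π n + π i - x else π l
    -- (a) π' is again a probability vector on {2,…,n}
    ((∀ l ∈ Finset.Icc 2 n, 0 ≤ π' l) ∧ ∑ l ∈ Finset.Icc 2 n, π' l = 1) ∧
    -- (b) π' has the same mean as π
    (∑ l ∈ Finset.Icc 2 n, (l : ℝ) * π' l = ∑ l ∈ Finset.Icc 2 n, (l : ℝ) * π l) ∧
    -- (c) the objective does not decrease
    (∑ l ∈ Finset.Icc 2 n, π l / (l : ℝ) ≤ ∑ l ∈ Finset.Icc 2 n, π' l / (l : ℝ)) := by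
  intro x π'
  have hI : (2:ℝ) < (i:ℝ) := by exact_mod_cast hi2
  have hIN : (i:ℝ) < (n:ℝ) := by exact_mod_cast hin
  have hN2 : (0:ℝ) < (n:ℝ) - 2 := by linarith
  have hpi : 0 ≤ π i := hπ0 i (by simp [Finset.mem_Icc]; omega)
  have hx0 : 0 ≤ x := by
    apply mul_nonneg _ hpi
    apply div_nonneg <;> linarith
  have hxle : x ≤ π i := by
    have h1 : ((n:ℝ) - i) / ((n:ℝ) - 2) ≤ 1 := by
      rw [div_le_one hN2]; linarith
    calc x ≤ 1 * π i := mul_le_mul_of_nonneg_right h1 hpi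
    _ = π i := one_mul _
  have h2i : (2:ℕ) ≠ i := by omega
  have h2n : (2:ℕ) ≠ n := by omega
  have hin' : i ≠ n := by omega
  have hπ'2 : π' 2 = π 2 + x := by simp [π']
  have hπ'i : π' i = 0 := by simp [π', h2i.symm]
  have hπ'n : π' n = π n + π i - x := by simp [π', h2n.symm, hin', Ne.symm hin']
  have hπ'other : ∀ l, l ≠ 2 → l ≠ i → l ≠ n → π' l = π l := by
    intro l h1 h2 h3; simp [π', h1, h2, h3]
  have hT : ({2, i, n} : Finset ℕ) ⊆ Finset.Icc 2 n := by
    intro l hl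
    simp only [Finset.mem_insert, Finset.mem_singleton] at hl
    simp only [Finset.mem_Icc]; omega
  have hmem : i ∉ ({n} : Finset ℕ) := by simp [hin']
  have hmem2 : (2:ℕ) ∉ ({i, n} : Finset ℕ) := by simp [h2i, h2n]
  have hsplit : ∀ F : ℕ → ℝ, ∑ l ∈ Finset.Icc 2 n, F l
      = ∑ l ∈ Finset.Icc 2 n \ {2, i, n}, F l + (F 2 + F i + F n) := by
    intro F
    rw [← Finset.sum_sdiff hT]
    congr 1
    rw [Finset.sum_insert hmem2, Finset.sum_insert hmem, Finset.sum_singleton]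
    ring
  have hcongr : ∀ F : ℝ → ℕ → ℝ,
      ∑ l ∈ Finset.Icc 2 n \ {2, i, n}, F (π' l) l
        = ∑ l ∈ Finset.Icc 2 n \ {2, i, n}, F (π l) l := by
    intro F
    apply Finset.sum_congr rfl
    intro l hl
    simp only [Finset.mem_sdiff, Finset.mem_insert, Finset.mem_singleton] at hl
    rw [hπ'other l (by tauto) (by tauto) (by tauto)]
  have hxkey : x * ((n:ℝ) - 2) = ((n:ℝ) - i) * π i := by
    show (((n : ℝ) - (i : ℝ)) / ((n : ℝ) - 2)) * π i * ((n:ℝ) - 2) = _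
    field_simp
  refine ⟨⟨?_, ?_⟩, ?_, ?_⟩
  · intro l hl
    rcases eq_or_ne l 2 with rfl | hl2
    · rw [hπ'2]
      have := hπ0 2 hl; linarith
    rcases eq_or_ne l i with rfl | hli
    · rw [hπ'i]
    rcases eq_or_ne l n with hln | hln
    · rw [hln, hπ'n]
      have := hπ0 n (hln ▸ hl); linarith
    · rw [hπ'other l hl2 hli hln]; exact hπ0 l hl
  · rw [hsplit π', hcongr (fun a _ => a), hπ'2, hπ'i, hπ'n]
    rw [hsplit π] at hπ1
    linarith
  · rw [hsplit (fun l => (l:ℝ) * π' l), hsplit (fun l => (l:ℝ) * π l),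
      hcongr (fun a l => (l:ℝ) * a), hπ'2, hπ'i, hπ'n]
    push_cast
    nlinarith [hxkey]
  · rw [hsplit (fun l => π l / (l:ℝ)), hsplit (fun l => π' l / (l:ℝ)),
      hcongr (fun a l => a / (l:ℝ)), hπ'2, hπ'i, hπ'n]
    have hIpos : (0:ℝ) < i := by linarith
    have hNpos : (0:ℝ) < n := by linarith
    have key : π i / (i:ℝ) ≤ x / 2 + (π i - x) / (n:ℝ) := by
      have hxe : x = ((n:ℝ)-(i:ℝ))/((n:ℝ)-2) * π i := rfl
      have heq : x / 2 + (π i - x) / (n:ℝ) - π i / (i:ℝ)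
          = π i * (((n:ℝ)-2)*((i:ℝ)-2)*((n:ℝ)-(i:ℝ))) / (2*(i:ℝ)*(n:ℝ)*((n:ℝ)-2)) := by
        rw [hxe]
        field_simp
        ring
      nlinarith [heq, div_nonneg (mul_nonneg hpi (mul_nonneg (mul_nonneg hN2.le (by linarith : (0:ℝ) ≤ (i:ℝ)-2)) (by linarith : (0:ℝ) ≤ (n:ℝ)-(i:ℝ)))) (by positivity : (0:ℝ) ≤ 2*(i:ℝ)*(n:ℝ)*((n:ℝ)-2))]
    have e1 : (π 2 + x) / 2 = π 2 / 2 + x / 2 := by ring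
    have e2 : (π n + π i - x) / (n:ℝ) = π n / n + (π i - x)/n := by ring
    push_cast
    rw [e1, e2, zero_div]
    linarith [key]
end

section
/- Fix q ∈ (0,1), ε ∈ (0,1), and an integer γ ≥ 1, and let b_θ = 1 + q(e^θ − 1) for θ ∈ ℝ. Define for t > 0 the upper capacity bound λ_t^U = inf_{θ>0} { 1 + (log b_{−γθ})/(γθ) − (log ε)/(tθ) }. Then lim_{t→∞} λ_t^U = 1 − q. -/
open Real Filter

lemma aux_pos {q s : ℝ} (hq0 : 0 < q) (hq1 : q < 1) :
    0 < 1 + q * (Real.exp (-s) - 1) := by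
  have := Real.exp_pos (-s); nlinarith

lemma aux_low {q s : ℝ} (hq0 : 0 < q) (hq1 : q < 1) :
    -(q * s) ≤ Real.log (1 + q * (Real.exp (-s) - 1)) := by
  have hc := convexOn_exp.2 (Set.mem_univ (-s)) (Set.mem_univ 0) hq0.le
    (by linarith : (0:ℝ) ≤ 1 - q) (by ring)
  simp only [smul_eq_mul, mul_zero, add_zero, Real.exp_zero, mul_one] at hc
  have h2 : Real.exp (q * -s) ≤ 1 + q * (Real.exp (-s) - 1) := by linarith
  have := Real.log_le_log (Real.exp_pos _) h2
  rw [Real.log_exp] at this; linarith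

lemma aux_up {q s : ℝ} (hq0 : 0 < q) (hq1 : q < 1) (hs : 0 ≤ s) :
    Real.log (1 + q * (Real.exp (-s) - 1)) ≤ q * (-s + s ^ 2) := by
  have h1 := Real.log_le_sub_one_of_pos (aux_pos (s := s) hq0 hq1)
  have h2 : Real.exp (-s) ≤ 1 - s + s ^ 2 := by
    have he : 1 + s ≤ Real.exp s := by linarith [Real.add_one_le_exp s]
    have hps : (0:ℝ) < 1 + s := by linarith
    have : Real.exp (-s) = (Real.exp s)⁻¹ := Real.exp_neg s
    rw [this]
    have h3 : (Real.exp s)⁻¹ ≤ (1 + s)⁻¹ := by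
      apply inv_anti₀ hps he
    have h4 : (1 + s)⁻¹ ≤ 1 - s + s ^ 2 := by
      rw [inv_le_iff_one_le_mul₀ hps] at *
      nlinarith
    linarith
  nlinarith

lemma aux_lb {q ε γr : ℝ} (hq0 : 0 < q) (hq1 : q < 1) (hγ0 : 0 < γr)
    (hlogε : Real.log ε ≤ 0) {t : ℝ} (ht : 0 < t) :
    ∀ x ∈ {x : ℝ | ∃ θ : ℝ, 0 < θ ∧
      x = 1 + Real.log (1 + q * (Real.exp (-(γr * θ)) - 1)) / (γr * θ)
          - Real.log ε / (t * θ)}, 1 - q ≤ x := by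
  rintro x ⟨θ, hθ, rfl⟩
  have hgθ : 0 < γr * θ := mul_pos hγ0 hθ
  have h1 : -q ≤ Real.log (1 + q * (Real.exp (-(γr * θ)) - 1)) / (γr * θ) := by
    rw [le_div_iff₀ hgθ]
    have := aux_low (s := γr * θ) hq0 hq1
    linarith
  have h2 : Real.log ε / (t * θ) ≤ 0 :=
    div_nonpos_of_nonpos_of_nonneg hlogε (mul_pos ht hθ).le
  linarith

/-- with `b_θ = 1 + q(e^θ − 1)`, the upper capacity bound
`λ_t^U = inf_{θ>0} { 1 + log(b_{−γθ})/(γθ) − log(ε)/(tθ) }` converges to the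
asymptotic capacity `1 − q` as `t → ∞`. -/
theorem stmt7 (q ε : ℝ) (hq : q ∈ Set.Ioo (0 : ℝ) 1) (hε : ε ∈ Set.Ioo (0 : ℝ) 1)
    (γ : ℕ) (hγ : 1 ≤ γ) :
    Filter.Tendsto (fun t : ℝ =>
        sInf {x : ℝ | ∃ θ : ℝ, 0 < θ ∧
          x = 1 + Real.log (1 + q * (Real.exp (-((γ : ℝ) * θ)) - 1)) / ((γ : ℝ) * θ)
              - Real.log ε / (t * θ)})
      Filter.atTop (nhds (1 - q)) := by
  obtain ⟨hq0, hq1⟩ := hq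
  obtain ⟨hε0, hε1⟩ := hε
  have hγr : (1:ℝ) ≤ (γ:ℝ) := by exact_mod_cast hγ
  have hγ0 : (0:ℝ) < (γ:ℝ) := by linarith
  have hlogε : Real.log ε < 0 := Real.log_neg hε0 hε1
  set c : ℝ := -Real.log ε with hcdef
  have hc0 : 0 < c := by simp only [hcdef]; linarith
  have h0 : Tendsto (fun t : ℝ => t ^ (-(1/2) : ℝ)) atTop (nhds 0) :=
    tendsto_rpow_neg_atTop (by norm_num)
  have hh : Tendsto (fun t : ℝ => 1 - q + ((γ:ℝ) + c) * t ^ (-(1/2) : ℝ)) atTop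
      (nhds (1 - q)) := by
    have := ((h0.const_mul ((γ:ℝ) + c)).const_add (1 - q))
    simpa using this
  refine tendsto_of_tendsto_of_tendsto_of_le_of_le' tendsto_const_nhds hh ?_ ?_
  · -- lower bound
    filter_upwards [eventually_ge_atTop (1:ℝ)] with t ht
    have ht0 : (0:ℝ) < t := by linarith
    refine le_csInf ⟨_, ⟨1, one_pos, rfl⟩⟩ (aux_lb hq0 hq1 hγ0 hlogε.le ht0)
  · -- upper bound
    filter_upwards [eventually_ge_atTop (1:ℝ)] with t ht
    have ht0 : (0:ℝ) < t := by linarith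
    set θt : ℝ := t ^ (-(1/2) : ℝ) with hθtdef
    have hθt : 0 < θt := Real.rpow_pos_of_pos ht0 _
    have hgθ : 0 < (γ:ℝ) * θt := mul_pos hγ0 hθt
    have hbdd : BddBelow {x : ℝ | ∃ θ : ℝ, 0 < θ ∧
        x = 1 + Real.log (1 + q * (Real.exp (-((γ:ℝ) * θ)) - 1)) / ((γ:ℝ) * θ)
            - Real.log ε / (t * θ)} :=
      ⟨1 - q, aux_lb hq0 hq1 hγ0 hlogε.le ht0⟩
    have hmem := csInf_le hbdd ⟨θt, hθt, rfl⟩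
    refine hmem.trans ?_
    -- now bound the value at θt
    have key : t * θt * θt = 1 := by
      rw [hθtdef]
      rw [show t * t ^ (-(1/2):ℝ) * t ^ (-(1/2):ℝ)
          = t ^ (1:ℝ) * t ^ (-(1/2):ℝ) * t ^ (-(1/2):ℝ) by rw [Real.rpow_one],
        ← Real.rpow_add ht0, ← Real.rpow_add ht0]
      norm_num
    have h5 : t * θt = 1 / θt := by
      rw [eq_div_iff hθt.ne']; exact key
    have h6 : Real.log ε / (t * θt) = Real.log ε * θt := by
      rw [h5, div_div_eq_mul_div, div_one, mul_comm]
    have h7 : Real.log (1 + q * (Real.exp (-((γ:ℝ) * θt)) - 1)) / ((γ:ℝ) * θt)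
        ≤ -q + (γ:ℝ) * θt := by
      rw [div_le_iff₀ hgθ]
      have := aux_up (s := (γ:ℝ) * θt) hq0 hq1 hgθ.le
      nlinarith
    have h8 : (γ:ℝ) * θt ≤ (γ:ℝ) * θt := le_refl _
    rw [h6]
    have : -Real.log ε * θt = c * θt := by rw [hcdef]
    nlinarith [hθt.le]
end

section
/- Fix q ∈ (0,1), ε ∈ (0,1), integers γ ≥ 1 and k_max ≥ 1, and a probability vector π̃ = (π̃_1,…,π̃_{k_max}). Let b_θ = 1 + q(e^θ − 1) for θ ∈ ℝ, and for integer t ≥ k_max define c_K(t) = Σ_{k=1}^{k_max} π̃_k · log( binomial(t+k−1, k−1) ) and the lower capacity bound λ_t^L = sup_{θ>0} { 1 − (log b_{γθ})/(γθ) + (log ε)/(tθ) − c_K(t)/(tθ) }. Then lim_{t→∞} λ_t^L = 1 − q. -/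
open Filter Real

lemma key_log (q s : ℝ) (hq0 : 0 < q) (hq1 : q < 1) :
    q * s ≤ Real.log (1 + q * (Real.exp s - 1)) := by
  have hconv := convexOn_exp.2 (Set.mem_univ (0:ℝ)) (Set.mem_univ s)
    (by linarith : (0:ℝ) ≤ 1 - q) hq0.le (by ring)
  simp only [smul_eq_mul, mul_zero, zero_add, Real.exp_zero, mul_one] at hconv
  have h1 : Real.exp (q * s) ≤ 1 + q * (Real.exp s - 1) := by linarith
  calc q * s = Real.log (Real.exp (q * s)) := (Real.log_exp _).symm
    _ ≤ Real.log (1 + q * (Real.exp s - 1)) :=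
      Real.log_le_log (Real.exp_pos _) h1

lemma key_slope (q : ℝ) :
    Tendsto (fun s : ℝ => Real.log (1 + q * (Real.exp s - 1)) / s)
      (nhdsWithin 0 {(0:ℝ)}ᶜ) (nhds q) := by
  have h1 : HasDerivAt (fun s : ℝ => 1 + q * (Real.exp s - 1)) (q * Real.exp 0) 0 :=
    (((Real.hasDerivAt_exp 0).sub_const 1).const_mul q).const_add 1
  have h2 : HasDerivAt (fun s : ℝ => Real.log (1 + q * (Real.exp s - 1))) q 0 := by
    have := h1.log (by simp)
    simpa using this
  have h3 := hasDerivAt_iff_tendsto_slope.mp h2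
  refine h3.congr' ?_
  filter_upwards [self_mem_nhdsWithin] with s hs
  simp [slope_def_field, Real.exp_zero]

lemma sqrt_tendsto_atTop : Tendsto Real.sqrt atTop atTop := by
  refine (tendsto_rpow_atTop (by norm_num : (0:ℝ) < 1/2)).congr' ?_
  filter_upwards with x using (Real.sqrt_eq_rpow x).symm

lemma log_div_sqrt : Tendsto (fun x : ℝ => Real.log x / Real.sqrt x) atTop (nhds 0) := by
  have := (isLittleO_log_rpow_atTop (by norm_num : (0:ℝ) < 1/2)).tendsto_div_nhds_zero
  refine this.congr' ?_
  filter_upwards with x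
  rw [Real.sqrt_eq_rpow]

/-- with `b_θ = 1 + q(e^θ − 1)` and
`c_K(t) = ∑_{k=1}^{k_max} π̃_k log C(t+k−1, k−1)`, the lower capacity bound
`λ_t^L = sup_{θ>0} { 1 − log(b_{γθ})/(γθ) + log(ε)/(tθ) − c_K(t)/(tθ) }`
converges to the asymptotic capacity `1 − q` as `t → ∞`. -/
theorem stmt8 (q ε : ℝ) (hq : q ∈ Set.Ioo (0 : ℝ) 1) (hε : ε ∈ Set.Ioo (0 : ℝ) 1)
    (γ kmax : ℕ) (hγ : 1 ≤ γ) (hkmax : 1 ≤ kmax)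
    (π' : ℕ → ℝ) (hπ'0 : ∀ k ∈ Finset.Icc 1 kmax, 0 ≤ π' k)
    (hπ'1 : ∑ k ∈ Finset.Icc 1 kmax, π' k = 1) :
    Filter.Tendsto (fun t : ℕ =>
        sSup {x : ℝ | ∃ θ : ℝ, 0 < θ ∧
          x = 1 - Real.log (1 + q * (Real.exp ((γ : ℝ) * θ) - 1)) / ((γ : ℝ) * θ)
              + Real.log ε / ((t : ℝ) * θ)
              - (∑ k ∈ Finset.Icc 1 kmax,
                  π' k * Real.log ((Nat.choose (t + k - 1) (k - 1) : ℝ)))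
                / ((t : ℝ) * θ)})
      Filter.atTop (nhds (1 - q)) := by
  obtain ⟨hq0, hq1⟩ := hq
  obtain ⟨hε0, hε1⟩ := hε
  set c : ℕ → ℝ := fun t => ∑ k ∈ Finset.Icc 1 kmax,
      π' k * Real.log ((Nat.choose (t + k - 1) (k - 1) : ℝ)) with hc
  set S : ℕ → Set ℝ := fun t => {x : ℝ | ∃ θ : ℝ, 0 < θ ∧
      x = 1 - Real.log (1 + q * (Real.exp ((γ : ℝ) * θ) - 1)) / ((γ : ℝ) * θ)
          + Real.log ε / ((t : ℝ) * θ) - c t / ((t : ℝ) * θ)} with hS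
  -- c is nonnegative
  have hγ0 : (0:ℝ) < (γ:ℝ) := by exact_mod_cast hγ
  have hchoose1 : ∀ t k : ℕ, 1 ≤ k → (1:ℝ) ≤ ((Nat.choose (t + k - 1) (k - 1) : ℕ) : ℝ) := by
    intro t k hk
    have : 0 < Nat.choose (t + k - 1) (k - 1) := by
      apply Nat.choose_pos
      omega
    exact_mod_cast this
  have hc0 : ∀ t, 0 ≤ c t := by
    intro t
    apply Finset.sum_nonneg
    intro k hk
    have hk1 : 1 ≤ k := (Finset.mem_Icc.mp hk).1
    exact mul_nonneg (hπ'0 k hk) (Real.log_nonneg (hchoose1 t k hk1))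
  -- upper bound
  have hub : ∀ t : ℕ, ∀ x ∈ S t, x ≤ 1 - q := by
    intro t x hx
    obtain ⟨θ, hθ, rfl⟩ := hx
    have hs : 0 < (γ:ℝ) * θ := mul_pos hγ0 hθ
    have h1 : q ≤ Real.log (1 + q * (Real.exp ((γ:ℝ)*θ) - 1)) / ((γ:ℝ)*θ) :=
      (le_div_iff₀ hs).mpr (key_log q _ hq0 hq1)
    have htθ : 0 ≤ (t:ℝ) * θ := mul_nonneg (Nat.cast_nonneg t) hθ.le
    have h2 : Real.log ε / ((t:ℝ)*θ) ≤ 0 :=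
      div_nonpos_iff.mpr (Or.inr ⟨(Real.log_neg hε0 hε1).le, htθ⟩)
    have h3 : 0 ≤ c t / ((t:ℝ)*θ) := div_nonneg (hc0 t) htθ
    linarith
  have hne : ∀ t : ℕ, (S t).Nonempty := fun t =>
    ⟨_, ⟨1, one_pos, rfl⟩⟩
  have hbdd : ∀ t : ℕ, BddAbove (S t) := fun t => ⟨1 - q, fun x hx => hub t x hx⟩
  -- the lower sequence g
  set θ : ℕ → ℝ := fun t => (Real.sqrt t)⁻¹ with hθdef
  have hsqrtN : Tendsto (fun t : ℕ => Real.sqrt t) atTop atTop :=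
    sqrt_tendsto_atTop.comp tendsto_natCast_atTop_atTop
  have hkey : ∀ t : ℕ, (t:ℝ) * θ t = Real.sqrt t := by
    intro t
    rw [hθdef]
    rw [← div_eq_mul_inv, Real.div_sqrt]
  -- A: first term tends to q
  have hsA : Tendsto (fun t : ℕ => (γ:ℝ) * θ t) atTop (nhdsWithin 0 {(0:ℝ)}ᶜ) := by
    rw [tendsto_nhdsWithin_iff]
    constructor
    · have : Tendsto (fun t : ℕ => (θ t : ℝ)) atTop (nhds 0) := hsqrtN.inv_tendsto_atTop
      simpa using this.const_mul (γ:ℝ)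
    · filter_upwards [eventually_gt_atTop 0] with t ht
      have : 0 < Real.sqrt t := Real.sqrt_pos.mpr (by exact_mod_cast ht)
      have : 0 < (γ:ℝ) * θ t := mul_pos hγ0 (by positivity)
      exact Set.mem_compl_singleton_iff.mpr (ne_of_gt this)
  have hA : Tendsto (fun t : ℕ =>
      Real.log (1 + q * (Real.exp ((γ:ℝ) * θ t) - 1)) / ((γ:ℝ) * θ t)) atTop (nhds q) :=
    (key_slope q).comp hsA
  -- B
  have hB : Tendsto (fun t : ℕ => Real.log ε / ((t:ℝ) * θ t)) atTop (nhds 0) := by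
    simp only [hkey]
    exact tendsto_const_nhds.div_atTop hsqrtN
  -- C
  have hCub : Tendsto (fun t : ℕ => (kmax:ℝ) * (Real.log 2 + Real.log t) / Real.sqrt t)
      atTop (nhds 0) := by
    have h1 : Tendsto (fun t : ℕ => Real.log (t:ℝ) / Real.sqrt t) atTop (nhds 0) :=
      log_div_sqrt.comp tendsto_natCast_atTop_atTop
    have h2 : Tendsto (fun t : ℕ => Real.log 2 / Real.sqrt t) atTop (nhds 0) :=
      tendsto_const_nhds.div_atTop hsqrtN
    have := ((h2.add h1).const_mul (kmax:ℝ))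
    simp only [add_zero, mul_zero] at this
    refine this.congr fun t => by ring
  have hC : Tendsto (fun t : ℕ => c t / ((t:ℝ) * θ t)) atTop (nhds 0) := by
    simp only [hkey]
    apply tendsto_of_tendsto_of_tendsto_of_le_of_le' tendsto_const_nhds hCub
    · filter_upwards with t
      exact div_nonneg (hc0 t) (Real.sqrt_nonneg _)
    · filter_upwards [eventually_ge_atTop kmax, eventually_ge_atTop 1] with t h1 h2
      gcongr
      · -- c t ≤ kmax * (log 2 + log t)
        have ht0 : (0:ℝ) < (t:ℝ) := by exact_mod_cast h2
        calc c t ≤ ∑ k ∈ Finset.Icc 1 kmax, π' k * ((kmax:ℝ) * (Real.log 2 + Real.log t)) := by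
              apply Finset.sum_le_sum
              intro k hk
              obtain ⟨hk1, hk2⟩ := Finset.mem_Icc.mp hk
              apply mul_le_mul_of_nonneg_left ?_ (hπ'0 k hk)
              have hcpos : (0:ℝ) < ((Nat.choose (t + k - 1) (k - 1) : ℕ) : ℝ) :=
                lt_of_lt_of_le one_pos (hchoose1 t k hk1)
              have hcast : ((Nat.choose (t + k - 1) (k - 1) : ℕ) : ℝ)
                  ≤ ((t + k - 1 : ℕ) : ℝ) ^ (k - 1) := by
                exact_mod_cast Nat.choose_le_pow (t + k - 1) (k - 1)
              have hlog1 : Real.log ((Nat.choose (t + k - 1) (k - 1) : ℕ) : ℝ)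
                  ≤ ((k - 1 : ℕ) : ℝ) * Real.log ((t + k - 1 : ℕ) : ℝ) := by
                calc Real.log ((Nat.choose (t + k - 1) (k - 1) : ℕ) : ℝ)
                    ≤ Real.log (((t + k - 1 : ℕ) : ℝ) ^ (k - 1)) :=
                      Real.log_le_log hcpos hcast
                  _ = ((k - 1 : ℕ) : ℝ) * Real.log ((t + k - 1 : ℕ) : ℝ) :=
                      Real.log_pow _ _
              have hn1 : (1:ℝ) ≤ ((t + k - 1 : ℕ) : ℝ) := by
                exact_mod_cast (by omega : 1 ≤ t + k - 1)
              have e1 : ((t + k - 1 : ℕ) : ℝ) ≤ 2 * (t:ℝ) := by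
                have : (t + k - 1 : ℕ) ≤ 2 * t := by omega
                exact_mod_cast this
              have e2 : Real.log ((t + k - 1 : ℕ) : ℝ) ≤ Real.log (2 * (t:ℝ)) :=
                Real.log_le_log (lt_of_lt_of_le one_pos hn1) e1
              have e3 : 0 ≤ Real.log ((t + k - 1 : ℕ) : ℝ) := Real.log_nonneg hn1
              have e4 : ((k - 1 : ℕ) : ℝ) ≤ (kmax:ℝ) := by
                exact_mod_cast (by omega : k - 1 ≤ kmax)
              have e5 : Real.log (2 * (t:ℝ)) = Real.log 2 + Real.log t :=
                Real.log_mul (by norm_num) (ne_of_gt ht0)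
              calc Real.log ((Nat.choose (t + k - 1) (k - 1) : ℕ) : ℝ)
                  ≤ ((k - 1 : ℕ) : ℝ) * Real.log ((t + k - 1 : ℕ) : ℝ) := hlog1
                _ ≤ (kmax:ℝ) * Real.log (2 * (t:ℝ)) :=
                    mul_le_mul e4 e2 e3 (Nat.cast_nonneg kmax)
                _ = (kmax:ℝ) * (Real.log 2 + Real.log t) := by rw [e5]
          _ = (kmax:ℝ) * (Real.log 2 + Real.log t) := by
              rw [← Finset.sum_mul, hπ'1, one_mul]
  -- assemble the lower sequence limit
  have hg : Tendsto (fun t : ℕ =>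
      1 - Real.log (1 + q * (Real.exp ((γ:ℝ) * θ t) - 1)) / ((γ:ℝ) * θ t)
        + Real.log ε / ((t:ℝ) * θ t) - c t / ((t:ℝ) * θ t)) atTop (nhds (1 - q)) := by
    have h0 : Tendsto (fun _ : ℕ => (1:ℝ)) atTop (nhds 1) := tendsto_const_nhds
    have := ((h0.sub hA).add hB).sub hC
    simpa using this
  -- final squeeze
  apply tendsto_of_tendsto_of_tendsto_of_le_of_le' hg tendsto_const_nhds
  · filter_upwards [eventually_ge_atTop 1] with t ht
    apply le_csSup (hbdd t)
    have hθpos : 0 < θ t := by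
      have : 0 < Real.sqrt t := Real.sqrt_pos.mpr (by exact_mod_cast ht)
      positivity
    exact ⟨θ t, hθpos, rfl⟩
  · filter_upwards with t
    exact csSup_le (hne t) (fun x hx => hub t x hx)
end

section
/- Let n ≥ 2 an integer and π = (π_2,…,π_n) a probability vector on {2,…,n} with mean m = Σ_{l=2}^n l·π_l (so m ≥ 2), and choose the transmission probability p = 1/m. Then the asymptotic per-flow capacity λ = Σ_{l=2}^n π_l · (1/m)(1 − 1/m)^{l−1} satisfies 1/(e·m) ≤ λ ≤ 1/m. In particular, with p = 1/E[N] the capacity scales as Θ(1/E[N]). -/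
lemma convexOn_exp_affine (c d : ℝ) :
    ConvexOn ℝ Set.univ (fun x : ℝ => Real.exp (c * x + d)) := by
  have h := convexOn_exp.comp_affineMap
    (LinearMap.toAffineMap (c • LinearMap.id (R := ℝ) (M := ℝ)) + AffineMap.const ℝ ℝ d)
  have e : (fun x : ℝ => Real.exp (c * x + d)) = Real.exp ∘
      ⇑(LinearMap.toAffineMap (c • LinearMap.id (R := ℝ) (M := ℝ)) + AffineMap.const ℝ ℝ d) := by
    funext x; simp [mul_comm]
  rw [e]; simpa using h

/-- with the mean-optimized fixed transmission probability `p = 1/E[N]`,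
the asymptotic per-flow capacity `λ = ∑ π_l (1/m)(1−1/m)^{l−1}` satisfies
`1/(e·m) ≤ λ ≤ 1/m`, i.e., it scales as `Θ(1/E[N])`. -/
theorem stmt11 (n : ℕ) (hn : 2 ≤ n)
    (π : ℕ → ℝ) (hπ0 : ∀ l ∈ Finset.Icc 2 n, 0 ≤ π l)
    (hπ1 : ∑ l ∈ Finset.Icc 2 n, π l = 1)
    (m : ℝ) (hm : m = ∑ l ∈ Finset.Icc 2 n, (l : ℝ) * π l) :
    1 / (Real.exp 1 * m) ≤
        ∑ l ∈ Finset.Icc 2 n, π l * ((1 / m) * (1 - 1 / m) ^ (l - 1)) ∧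
      ∑ l ∈ Finset.Icc 2 n, π l * ((1 / m) * (1 - 1 / m) ^ (l - 1)) ≤ 1 / m := by
  -- m ≥ 2
  have hm2 : (2 : ℝ) ≤ m := by
    rw [hm]
    calc (2 : ℝ) = ∑ l ∈ Finset.Icc 2 n, 2 * π l := by
          rw [← Finset.mul_sum, hπ1, mul_one]
      _ ≤ ∑ l ∈ Finset.Icc 2 n, (l : ℝ) * π l := by
          apply Finset.sum_le_sum
          intro l hl
          have h2 : (2 : ℝ) ≤ (l : ℝ) := by
            exact_mod_cast (Finset.mem_Icc.mp hl).1
          exact mul_le_mul_of_nonneg_right h2 (hπ0 l hl)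
  have hm0 : 0 < m := by linarith
  have hq0 : 0 ≤ 1 - 1 / m := by
    have : 1 / m ≤ 1 / 2 := by
      apply one_div_le_one_div_of_le <;> linarith
    linarith
  have hq1 : 1 - 1 / m ≤ 1 := by
    have : 0 ≤ 1 / m := by positivity
    linarith
  constructor
  · -- lower bound via Jensen
    set c : ℝ := Real.log (1 - 1 / m) with hc
    have hqpos : 0 < 1 - 1 / m := by
      have : 1 / m < 1 := by
        rw [div_lt_one hm0]; linarith
      linarith
    have hconv := convexOn_exp_affine c (-c)
    have hjson := hconv.map_sum_le (t := Finset.Icc 2 n) (w := π)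
      (p := fun l : ℕ => (l : ℝ)) hπ0 hπ1 (fun i _ => Set.mem_univ _)
    -- identify terms
    have hterm : ∀ l ∈ Finset.Icc 2 n,
        π l • Real.exp (c * (l : ℝ) + -c) = π l * (1 - 1 / m) ^ (l - 1) := by
      intro l hl
      have hl2 := (Finset.mem_Icc.mp hl).1
      have : Real.exp (c * (l : ℝ) + -c) = (1 - 1 / m) ^ (l - 1) := by
        have h1 : c * (l : ℝ) + -c = ((l - 1 : ℕ) : ℝ) * c := by
          have : ((l - 1 : ℕ) : ℝ) = (l : ℝ) - 1 := by
            have := Nat.cast_sub (by omega : 1 ≤ l) (R := ℝ)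
            simpa using this
          rw [this]; ring
        rw [h1, mul_comm, Real.exp_mul, Real.exp_log hqpos,
          ← Real.rpow_natCast]
      rw [smul_eq_mul, this]
    have hsum : ∑ l ∈ Finset.Icc 2 n, π l • (fun x : ℝ => Real.exp (c * x + -c)) (l : ℝ)
        = ∑ l ∈ Finset.Icc 2 n, π l * (1 - 1 / m) ^ (l - 1) := by
      apply Finset.sum_congr rfl
      intro l hl; exact hterm l hl
    have hmean : ∑ l ∈ Finset.Icc 2 n, π l • ((l : ℝ)) = m := by
      rw [hm]; apply Finset.sum_congr rfl; intro l _; rw [smul_eq_mul, mul_comm]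
    rw [hmean, hsum] at hjson
    -- exp(c*(m-1)) ≥ exp(-1)
    have hlog : -(1 / (m - 1)) ≤ c := by
      rw [hc]
      have h := Real.one_sub_inv_le_log_of_pos hqpos
      have heq : 1 - (1 - 1 / m)⁻¹ = -(1 / (m - 1)) := by
        have hm1 : m - 1 ≠ 0 := ne_of_gt (by linarith)
        have hq : (1 : ℝ) - 1 / m ≠ 0 := ne_of_gt hqpos
        field_simp
        ring
      rw [heq] at h
      exact h
    have hexp : Real.exp (-1) ≤ Real.exp (c * m + -c) := by
      apply Real.exp_le_exp.mpr
      have : c * m + -c = c * (m - 1) := by ring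
      rw [this]
      have hm1 : (0 : ℝ) < m - 1 := by linarith
      calc (-1 : ℝ) = (-(1 / (m - 1))) * (m - 1) := by field_simp
        _ ≤ c * (m - 1) := mul_le_mul_of_nonneg_right hlog (le_of_lt hm1)
    have hlower : Real.exp (-1) ≤ ∑ l ∈ Finset.Icc 2 n, π l * (1 - 1 / m) ^ (l - 1) :=
      le_trans hexp hjson
    have hrw : ∑ l ∈ Finset.Icc 2 n, π l * ((1 / m) * (1 - 1 / m) ^ (l - 1))
        = (1 / m) * ∑ l ∈ Finset.Icc 2 n, π l * (1 - 1 / m) ^ (l - 1) := by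
      rw [Finset.mul_sum]; apply Finset.sum_congr rfl; intro l _; ring
    rw [hrw]
    have : 1 / (Real.exp 1 * m) = (1 / m) * Real.exp (-1) := by
      rw [Real.exp_neg]; field_simp
    rw [this]
    exact mul_le_mul_of_nonneg_left hlower (by positivity)
  · -- upper bound
    calc ∑ l ∈ Finset.Icc 2 n, π l * ((1 / m) * (1 - 1 / m) ^ (l - 1))
        ≤ ∑ l ∈ Finset.Icc 2 n, π l * (1 / m) := by
          apply Finset.sum_le_sum
          intro l hl
          apply mul_le_mul_of_nonneg_left _ (hπ0 l hl)
          have hpow : (1 - 1 / m) ^ (l - 1) ≤ 1 :=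
            pow_le_one₀ hq0 hq1
          calc (1 / m) * (1 - 1 / m) ^ (l - 1) ≤ (1 / m) * 1 :=
                mul_le_mul_of_nonneg_left hpow (by positivity)
            _ = 1 / m := mul_one _
      _ = 1 / m := by rw [← Finset.sum_mul, hπ1, one_mul]
end

section
/- For each integer n ≥ 3 let π be the uniform distribution on {2,…,n}, i.e., π_l = 1/(n−1) for l = 2,…,n, and let G(n) = ( Σ_{l=2}^n l·π_l ) · ( Σ_{l=2}^n π_l/l ) be the randomness gain. Then lim_{n→∞} G(n)/log n = 1/2; in particular the randomness gain of the uniform distribution is Θ(log n). -/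
/-- The randomness gain `E[N]·E[1/N]` of the uniform distribution
`π_l = 1/(n−1)` on `{2,…,n}`. -/
noncomputable def uniformGain (n : ℕ) : ℝ :=
  (∑ l ∈ Finset.Icc 2 n, (l : ℝ) * (1 / ((n : ℝ) - 1))) *
    (∑ l ∈ Finset.Icc 2 n, (1 / ((n : ℝ) - 1)) / (l : ℝ))

open Finset Filter Real

lemma sum_Icc_id (n : ℕ) (hn : 2 ≤ n) :
    ∑ l ∈ Finset.Icc 2 n, (l : ℝ) = ((n : ℝ) - 1) * ((n : ℝ) + 2) / 2 := by
  induction n with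
  | zero => omega
  | succ m ih =>
    rcases Nat.lt_or_ge m 2 with hm | hm
    · interval_cases m
      · omega
      · norm_num [Finset.Icc_self]
    · rw [Finset.sum_Icc_succ_top (by omega), ih hm]
      push_cast
      ring

lemma sum_Icc_inv (n : ℕ) (hn : 1 ≤ n) :
    ∑ l ∈ Finset.Icc 2 n, (1 : ℝ) / (l : ℝ) = (harmonic n : ℝ) - 1 := by
  induction n with
  | zero => omega
  | succ m ih =>
    rcases Nat.lt_or_ge m 1 with hm | hm
    · interval_cases m
      simp [harmonic_succ]
    · rw [Finset.sum_Icc_succ_top (by omega), ih hm, harmonic_succ]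
      push_cast
      ring

lemma gain_eq (n : ℕ) (hn : 2 ≤ n) :
    uniformGain n = (((n : ℝ) + 2) / (2 * ((n : ℝ) - 1))) * ((harmonic n : ℝ) - 1) := by
  have h2 : (2 : ℝ) ≤ (n : ℝ) := by exact_mod_cast hn
  have hne : (n : ℝ) - 1 ≠ 0 := by nlinarith
  unfold uniformGain
  rw [← Finset.sum_mul,
    show (∑ l ∈ Finset.Icc 2 n, (1 / ((n:ℝ) - 1)) / (l:ℝ))
      = (1 / ((n:ℝ) - 1)) * ∑ l ∈ Finset.Icc 2 n, (1:ℝ)/(l:ℝ) by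
    rw [Finset.mul_sum]; apply Finset.sum_congr rfl; intro l _; ring,
    sum_Icc_id n hn, sum_Icc_inv n (by omega)]
  field_simp

/-- for the uniform distribution on `{2,…,n}`, the randomness gain
`G(n) = E[N]·E[1/N]` satisfies `lim_{n→∞} G(n)/log n = 1/2`; in particular
`G(n) = Θ(log n)`. -/
theorem stmt13 :
    Filter.Tendsto (fun n : ℕ => uniformGain n / Real.log n)
        Filter.atTop (nhds (1 / 2)) ∧
      ∃ c₁ c₂ : ℝ, 0 < c₁ ∧ 0 < c₂ ∧ ∃ n₀ : ℕ, ∀ n : ℕ, n₀ ≤ n →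
        c₁ * Real.log n ≤ uniformGain n ∧ uniformGain n ≤ c₂ * Real.log n := by
  have hlog : Tendsto (fun n : ℕ => Real.log n) atTop atTop :=
    Real.tendsto_log_atTop.comp tendsto_natCast_atTop_atTop
  have hloginv : Tendsto (fun n : ℕ => (Real.log n)⁻¹) atTop (nhds 0) :=
    hlog.inv_tendsto_atTop
  -- (harmonic n - log n) → γ
  have hγ : Tendsto (fun n : ℕ => (harmonic n : ℝ) - Real.log n) atTop
      (nhds Real.eulerMascheroniConstant) := by
    apply Real.tendsto_eulerMascheroniSeq'.congr'
    filter_upwards [eventually_ne_atTop 0] with n hn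
    simp [Real.eulerMascheroniSeq', hn]
  -- ratio part
  have hratio : Tendsto (fun n : ℕ => (((n:ℝ) + 2) / (2 * ((n:ℝ) - 1)))) atTop
      (nhds (1/2)) := by
    have h1 : Tendsto (fun n : ℕ => (1 + 2 * ((n:ℝ))⁻¹) / (2 - 2 * ((n:ℝ))⁻¹)) atTop
        (nhds (1/2)) := by
      have hinv : Tendsto (fun n : ℕ => ((n:ℝ))⁻¹) atTop (nhds 0) :=
        tendsto_inv_atTop_zero.comp tendsto_natCast_atTop_atTop
      have hnum : Tendsto (fun n : ℕ => 1 + 2 * ((n:ℝ))⁻¹) atTop (nhds 1) := by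
        simpa using tendsto_const_nhds.add (hinv.const_mul 2)
      have hden : Tendsto (fun n : ℕ => 2 - 2 * ((n:ℝ))⁻¹) atTop (nhds 2) := by
        simpa using tendsto_const_nhds.sub (hinv.const_mul 2)
      have := hnum.div hden (by norm_num)
      norm_num at this
      exact this
    apply h1.congr'
    filter_upwards [eventually_ge_atTop 2] with n hn
    have h2 : (2 : ℝ) ≤ (n : ℝ) := by exact_mod_cast hn
    have hne : (n : ℝ) ≠ 0 := by positivity
    field_simp
  have hH : Tendsto (fun n : ℕ => ((harmonic n : ℝ) - 1) / Real.log n) atTop (nhds 1) := by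
    have h1 : Tendsto (fun n : ℕ =>
        ((harmonic n : ℝ) - Real.log n) * (Real.log n)⁻¹ + 1 - (Real.log n)⁻¹) atTop
        (nhds 1) := by
      have := ((hγ.mul hloginv).add_const 1).sub hloginv
      simpa using this
    apply h1.congr'
    filter_upwards [hlog.eventually_gt_atTop 0] with n hn
    have hne : Real.log n ≠ 0 := ne_of_gt hn
    field_simp
    ring
  have hmain : Tendsto (fun n : ℕ => uniformGain n / Real.log n) atTop (nhds (1 / 2)) := by
    have h := hratio.mul hH
    rw [mul_one] at h
    apply h.congr'
    filter_upwards [eventually_ge_atTop 2] with n hn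
    rw [gain_eq n hn]
    ring
  refine ⟨hmain, 1/4, 3/4, by norm_num, by norm_num, ?_⟩
  have hball : ∀ᶠ n : ℕ in atTop, uniformGain n / Real.log n ∈ Set.Ioo (1/4 : ℝ) (3/4) :=
    hmain (Ioo_mem_nhds (by norm_num) (by norm_num))
  obtain ⟨n₀, hn₀⟩ := (hball.and (eventually_ge_atTop 2)).exists_forall_of_atTop
  refine ⟨max n₀ 2, fun n hn => ?_⟩
  obtain ⟨⟨h1, h2⟩, hn2⟩ := hn₀ n (le_trans (le_max_left _ _) hn)
  have hn2' : (2 : ℕ) ≤ n := le_trans (le_max_right _ _) hn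
  have hlogpos : 0 < Real.log n := by
    apply Real.log_pos
    exact_mod_cast Nat.lt_of_lt_of_le one_lt_two hn2'
  constructor
  · calc (1/4 : ℝ) * Real.log n ≤ (uniformGain n / Real.log n) * Real.log n := by
          apply mul_le_mul_of_nonneg_right h1.le hlogpos.le
        _ = uniformGain n := by field_simp
  · calc uniformGain n = (uniformGain n / Real.log n) * Real.log n := by field_simp
        _ ≤ (3/4 : ℝ) * Real.log n := mul_le_mul_of_nonneg_right h2.le hlogpos.le
end

section
/- Fix α ∈ (0,1). For each integer n large enough that 2 ≤ αn ≤ n, let m = αn and let π be the gain-maximizing bimodal distribution on {2,…,n}: π_2 = (n−m)/(n−2), π_n = (m−2)/(n−2), π_i = 0 otherwise (which has mean m). Let G(n) = m·( (1/2)·(n−m)/(n−2) + (1/n)·(m−2)/(n−2) ) be its randomness gain E[N]·E[1/N]. Then lim_{n→∞} G(n)/n = α(1−α)/2; in particular, with E[N] = Θ(n), the gain-maximizing distribution achieves randomness gain Θ(n). -/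
/-- for the gain-maximizing bimodal distribution on `{2,…,n}` with
mean `m = αn` (atoms `π₂ = (n−m)/(n−2)` and `πₙ = (m−2)/(n−2)`), the randomness
gain `G(n) = E[N]·E[1/N] = m·((1/2)(n−m)/(n−2) + (1/n)(m−2)/(n−2))` satisfies
`lim_{n→∞} G(n)/n = α(1−α)/2`; in particular the gain is `Θ(n)`. -/
theorem stmt15 (α : ℝ) (hα : α ∈ Set.Ioo (0 : ℝ) 1) :
    Filter.Tendsto (fun n : ℕ =>
        (α * (n : ℝ) *
          ((1 / 2) * (((n : ℝ) - α * (n : ℝ)) / ((n : ℝ) - 2)) +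
            (1 / (n : ℝ)) * ((α * (n : ℝ) - 2) / ((n : ℝ) - 2)))) / (n : ℝ))
      Filter.atTop (nhds (α * (1 - α) / 2)) := by
  set F : ℝ → ℝ := fun t => α * ((1 / 2) * ((1 - α) / (1 - 2 * t)) +
    t * ((α - 2 * t) / (1 - 2 * t))) with hF
  have hcont : ContinuousAt F 0 := by
    have h1 : (1 : ℝ) - 2 * 0 ≠ 0 := by norm_num
    fun_prop (disch := norm_num)
  have hF0 : F 0 = α * (1 - α) / 2 := by simp [hF]; ring
  have htend : Filter.Tendsto (fun n : ℕ => F (1 / (n : ℝ))) Filter.atTop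
      (nhds (α * (1 - α) / 2)) := by
    rw [← hF0]
    exact hcont.tendsto.comp tendsto_one_div_atTop_nhds_zero_nat
  refine htend.congr' ?_
  filter_upwards [Filter.eventually_ge_atTop 3] with n hn
  have hn3 : (3 : ℝ) ≤ (n : ℝ) := by exact_mod_cast hn
  have hn0 : (n : ℝ) ≠ 0 := by linarith
  have hn2 : (n : ℝ) - 2 ≠ 0 := by linarith
  have hd : 1 - 2 * (1 / (n : ℝ)) ≠ 0 := by
    rw [sub_ne_zero]
    intro h
    have : (n : ℝ) = 2 := by field_simp at h; linarith
    linarith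
  simp only [hF]
  field_simp
end

section
/- For each integer k ≥ 2 let π̃ be the heavy-tailed distribution π̃_l = κ_k/l² for l = 1,…,k, where κ_k = ( Σ_{l=1}^k 1/l² )^{−1}, and define the hop-randomness gain H(k) = log( Σ_{l=1}^k l·π̃_l ) − Σ_{l=1}^k π̃_l·log l. Then lim_{k→∞} H(k)/log(log k) = 1; in particular E[K] = Θ(log k), E[log K] converges to a finite constant as k → ∞ (using the convergence of Σ_{l≥1} (log l)/l²), and the gain is Θ(log log k). -/
/-- The heavy-tailed hop-count distribution `π̃_l = κ_k / l²` on `{1,…,k}`,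
with normalization `κ_k = (∑_{j=1}^k 1/j²)⁻¹`. -/
noncomputable def hopPi (k l : ℕ) : ℝ :=
  (∑ j ∈ Finset.Icc 1 k, 1 / (j : ℝ) ^ 2)⁻¹ / (l : ℝ) ^ 2

/-- `E[K]` under the heavy-tailed hop-count distribution. -/
noncomputable def hopEK (k : ℕ) : ℝ := ∑ l ∈ Finset.Icc 1 k, (l : ℝ) * hopPi k l

/-- `E[log K]` under the heavy-tailed hop-count distribution. -/
noncomputable def hopElogK (k : ℕ) : ℝ :=
  ∑ l ∈ Finset.Icc 1 k, hopPi k l * Real.log l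

/-- The hop-randomness gain `H(k) = log E[K] − E[log K]`. -/
noncomputable def hopGain (k : ℕ) : ℝ := Real.log (hopEK k) - hopElogK k

open Filter Finset

lemma sum_Icc_eq_range' {f : ℕ → ℝ} (hf : f 0 = 0) (k : ℕ) :
    ∑ j ∈ Finset.Icc 1 k, f j = ∑ j ∈ Finset.range (k+1), f j := by
  rw [← Finset.Ico_add_one_right_eq_Icc, Finset.range_eq_Ico,
    ← Finset.sum_Ico_consecutive f (Nat.zero_le 1) (Nat.le_add_left 1 k)]
  simp [hf]

lemma tendsto_Icc_sum' {f : ℕ → ℝ} (hf : f 0 = 0) (hs : Summable f) :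
    Tendsto (fun k => ∑ j ∈ Finset.Icc 1 k, f j) atTop (nhds (∑' j, f j)) := by
  have h : Tendsto (fun k : ℕ => ∑ j ∈ Finset.range (k+1), f j) atTop (nhds (∑' j, f j)) :=
    hs.hasSum.tendsto_sum_nat.comp (tendsto_add_atTop_nat 1)
  exact h.congr (fun k => (sum_Icc_eq_range' hf k).symm)

lemma summable_sq' : Summable (fun j : ℕ => 1 / (j:ℝ)^2) :=
  Real.summable_one_div_nat_pow.mpr one_lt_two

lemma log_nat_le' (j : ℕ) : Real.log j ≤ 2 * Real.sqrt j := by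
  rcases Nat.eq_zero_or_pos j with h | h
  · simp [h]
  have h1 : (1:ℝ) ≤ j := by exact_mod_cast h
  have hsq : Real.log j = 2 * Real.log (Real.sqrt j) := by
    rw [Real.log_sqrt (by positivity)]; ring
  rw [hsq]
  have := Real.log_le_sub_one_of_pos (x := Real.sqrt j) (by positivity)
  nlinarith [Real.sqrt_nonneg (j:ℝ)]

lemma summable_logsq' : Summable (fun j : ℕ => Real.log j / (j:ℝ)^2) := by
  have h32 : (1:ℝ) < 3/2 := by norm_num
  have hs0 : Summable (fun j : ℕ => 1 / (j:ℝ) ^ (3/2 : ℝ)) :=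
    Real.summable_one_div_nat_rpow.mpr h32
  have hs : Summable (fun j : ℕ => 2 * (1 / (j:ℝ) ^ (3/2 : ℝ))) := hs0.mul_left 2
  refine Summable.of_nonneg_of_le
    (fun j => div_nonneg (Real.log_natCast_nonneg j) (sq_nonneg _)) (fun j => ?_) hs
  rcases Nat.eq_zero_or_pos j with h | h
  · simp [h]
  have h1 : (1:ℝ) ≤ j := by exact_mod_cast h
  have hj0 : (0:ℝ) < j := by linarith
  have hb := log_nat_le' j
  have hsqrt : Real.sqrt j = (j:ℝ) ^ (1/2 : ℝ) := Real.sqrt_eq_rpow _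
  rw [div_le_iff₀ (by positivity)]
  calc Real.log j ≤ 2 * Real.sqrt j := hb
    _ = 2 * (1 / (j:ℝ) ^ (3/2:ℝ)) * (j:ℝ)^2 := by
        rw [hsqrt, ← Real.rpow_two, mul_assoc, div_mul_eq_mul_div, one_mul,
          ← Real.rpow_sub hj0]
        norm_num

/-- partial sums of `1/j²` -/
noncomputable def hopS (k : ℕ) : ℝ := ∑ j ∈ Finset.Icc 1 k, 1 / (j : ℝ) ^ 2
/-- partial sums of `1/l` -/
noncomputable def hopH (k : ℕ) : ℝ := ∑ l ∈ Finset.Icc 1 k, ((l : ℝ))⁻¹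
/-- partial sums of `log l / l²` -/
noncomputable def hopT (k : ℕ) : ℝ := ∑ l ∈ Finset.Icc 1 k, Real.log l / (l : ℝ) ^ 2

lemma hopS_tendsto : Tendsto hopS atTop (nhds (∑' j : ℕ, 1 / (j:ℝ)^2)) :=
  tendsto_Icc_sum' (by norm_num) summable_sq'

lemma hopT_tendsto : Tendsto hopT atTop (nhds (∑' j : ℕ, Real.log j / (j:ℝ)^2)) :=
  tendsto_Icc_sum' (by simp) summable_logsq'

lemma hopS_ge_one {k : ℕ} (hk : 1 ≤ k) : 1 ≤ hopS k := by
  have h1 : (1:ℕ) ∈ Finset.Icc 1 k := Finset.mem_Icc.mpr ⟨le_refl 1, hk⟩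
  have := Finset.single_le_sum (f := fun j : ℕ => 1 / (j:ℝ)^2)
    (fun i _ => by positivity) h1
  simpa [hopS, one_div] using this

lemma hopS_le : ∀ k, hopS k ≤ ∑' j : ℕ, 1 / (j:ℝ)^2 := fun k =>
  Summable.sum_le_tsum _ (fun i _ => by positivity) summable_sq'

lemma hopA_ge_one : 1 ≤ ∑' j : ℕ, 1 / (j:ℝ)^2 := le_trans (hopS_ge_one le_rfl) (hopS_le 1)

lemma hopH_eq_harmonic (k : ℕ) : hopH k = (harmonic k : ℝ) := by
  rw [harmonic_eq_sum_Icc]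
  push_cast
  rfl

lemma hopH_bounds (k : ℕ) : Real.log (k+1) ≤ hopH k ∧ hopH k ≤ 1 + Real.log k := by
  rw [hopH_eq_harmonic]
  exact ⟨by exact_mod_cast log_add_one_le_harmonic k, harmonic_le_one_add_log k⟩

lemma hopEK_eq (k : ℕ) : hopEK k = (hopS k)⁻¹ * hopH k := by
  rw [hopEK, hopH, Finset.mul_sum]
  refine Finset.sum_congr rfl (fun l hl => ?_)
  have hl1 : 1 ≤ l := (Finset.mem_Icc.mp hl).1
  have hl0 : (l:ℝ) ≠ 0 := Nat.cast_ne_zero.mpr (by omega)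
  rw [hopPi, hopS]
  field_simp

lemma hopElogK_eq (k : ℕ) : hopElogK k = (hopS k)⁻¹ * hopT k := by
  rw [hopElogK, hopT, Finset.mul_sum]
  refine Finset.sum_congr rfl (fun l hl => ?_)
  rw [hopPi, hopS]
  ring

lemma one_lt_log_three : 1 < Real.log 3 := by
  rw [Real.lt_log_iff_exp_lt (by norm_num)]
  calc Real.exp 1 < 2.7182818286 := Real.exp_one_lt_d9
    _ < 3 := by norm_num

/-- for the heavy-tailed hop-count distribution `π̃_l = κ_k/l²` on
`{1,…,k}`, the hop-randomness gain `H(k) = log E[K] − E[log K]` satisfies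
`lim_{k→∞} H(k)/log(log k) = 1`; in particular `E[K] = Θ(log k)`,
`E[log K]` converges to a finite constant, and the gain is `Θ(log log k)`. -/
theorem stmt16 :
    Filter.Tendsto (fun k : ℕ => hopGain k / Real.log (Real.log k))
        Filter.atTop (nhds 1) ∧
      (∃ c₁ c₂ : ℝ, 0 < c₁ ∧ 0 < c₂ ∧ ∃ k₀ : ℕ, ∀ k : ℕ, k₀ ≤ k →
        c₁ * Real.log k ≤ hopEK k ∧ hopEK k ≤ c₂ * Real.log k) ∧
      (∃ C : ℝ, Filter.Tendsto hopElogK Filter.atTop (nhds C)) := by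
  set A := ∑' j : ℕ, 1 / (j:ℝ)^2 with hAdef
  set B := ∑' j : ℕ, Real.log j / (j:ℝ)^2 with hBdef
  have hA1 : 1 ≤ A := hopA_ge_one
  have hA0 : (0:ℝ) < A := by linarith
  have hκ : Tendsto (fun k => (hopS k)⁻¹) atTop (nhds A⁻¹) :=
    hopS_tendsto.inv₀ (ne_of_gt hA0)
  have hlog1 : ∀ k : ℕ, 3 ≤ k → 1 < Real.log k := by
    intro k hk
    have : (3:ℝ) ≤ k := by exact_mod_cast hk
    exact lt_of_lt_of_le one_lt_log_three (Real.log_le_log (by norm_num) this)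
  have hHlb : ∀ k : ℕ, Real.log k ≤ hopH k := by
    intro k
    refine le_trans ?_ (hopH_bounds k).1
    rcases Nat.eq_zero_or_pos k with h | h
    · simp [h]
    · apply Real.log_le_log (by exact_mod_cast h)
      push_cast; linarith
  have hSpos : ∀ k : ℕ, 1 ≤ k → (0:ℝ) < hopS k := fun k hk =>
    lt_of_lt_of_le one_pos (hopS_ge_one hk)
  -- part 2
  have part2 : ∀ k : ℕ, 3 ≤ k →
      A⁻¹ * Real.log k ≤ hopEK k ∧ hopEK k ≤ 2 * Real.log k := by
    intro k hk
    have hk1 : 1 ≤ k := by omega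
    have hlogk : 1 < Real.log k := hlog1 k hk
    have hS1 : 1 ≤ hopS k := hopS_ge_one hk1
    have hSk : 0 < hopS k := hSpos k hk1
    have hκub : (hopS k)⁻¹ ≤ 1 := by simpa using inv_anti₀ one_pos hS1
    have hκlb' : A⁻¹ ≤ (hopS k)⁻¹ := inv_anti₀ hSk (hopS_le k)
    have hEK : hopEK k = (hopS k)⁻¹ * hopH k := hopEK_eq k
    have hHk := hHlb k
    have hHub := (hopH_bounds k).2
    constructor
    · rw [hEK]
      have h1 : A⁻¹ * Real.log k ≤ (hopS k)⁻¹ * Real.log k :=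
        mul_le_mul_of_nonneg_right hκlb' (by linarith)
      have h2 : (hopS k)⁻¹ * Real.log k ≤ (hopS k)⁻¹ * hopH k :=
        mul_le_mul_of_nonneg_left hHk (by positivity)
      linarith
    · rw [hEK]
      have h1 : (hopS k)⁻¹ * hopH k ≤ 1 * hopH k :=
        mul_le_mul_of_nonneg_right hκub (by linarith)
      have h2 : hopH k ≤ 2 * Real.log k := by linarith
      linarith
  -- part 3
  have part3 : Tendsto hopElogK atTop (nhds (A⁻¹ * B)) := by
    have := hκ.mul hopT_tendsto
    exact this.congr (fun k => (hopElogK_eq k).symm)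
  -- part 1
  have hlogcast : Tendsto (fun k : ℕ => Real.log k) atTop atTop :=
    Real.tendsto_log_atTop.comp tendsto_natCast_atTop_atTop
  have hloglog : Tendsto (fun k : ℕ => Real.log (Real.log k)) atTop atTop :=
    Real.tendsto_log_atTop.comp hlogcast
  have hHdiv : Tendsto (fun k : ℕ => hopH k / Real.log k) atTop (nhds 1) := by
    have hup : Tendsto (fun k : ℕ => 1 / Real.log k + 1) atTop (nhds 1) := by
      have := (tendsto_const_nhds (x := (1:ℝ))).div_atTop hlogcast
      simpa using this.add (tendsto_const_nhds (x := (1:ℝ)))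
    refine tendsto_of_tendsto_of_tendsto_of_le_of_le' tendsto_const_nhds hup ?_ ?_
    · filter_upwards [eventually_atTop.mpr ⟨3, fun k hk => hk⟩] with k hk
      have hlogk : 1 < Real.log k := hlog1 k hk
      rw [le_div_iff₀ (by linarith)]
      have := hHlb k
      linarith
    · filter_upwards [eventually_atTop.mpr ⟨3, fun k hk => hk⟩] with k hk
      have hlogk : 1 < Real.log k := hlog1 k hk
      rw [div_le_iff₀ (by linarith)]
      have := (hopH_bounds k).2
      have : hopH k ≤ 1 + Real.log k := this
      calc hopH k ≤ 1 + Real.log k := this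
        _ = (1 / Real.log k + 1) * Real.log k := by field_simp
  have hlogHdiv : Tendsto (fun k : ℕ => Real.log (hopH k / Real.log k)) atTop (nhds 0) := by
    have := (Real.continuousAt_log one_ne_zero).tendsto.comp hHdiv
    simpa [Function.comp_def] using this
  have hκlog : Tendsto (fun k : ℕ => Real.log ((hopS k)⁻¹)) atTop (nhds (Real.log A⁻¹)) :=
    (Real.continuousAt_log (by positivity)).tendsto.comp hκ
  set G : ℕ → ℝ := fun k =>
    Real.log ((hopS k)⁻¹) + Real.log (hopH k / Real.log k) - hopElogK k with hGdef
  have hG : Tendsto G atTop (nhds (Real.log A⁻¹ + 0 - A⁻¹ * B)) :=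
    (hκlog.add hlogHdiv).sub part3
  have hGdiv : Tendsto (fun k => G k / Real.log (Real.log k)) atTop (nhds 0) :=
    hG.div_atTop hloglog
  have hfinal : Tendsto (fun k => G k / Real.log (Real.log k) + 1) atTop (nhds 1) := by
    simpa using hGdiv.add (tendsto_const_nhds (x := (1:ℝ)))
  have part1 : Tendsto (fun k : ℕ => hopGain k / Real.log (Real.log k)) atTop (nhds 1) := by
    refine hfinal.congr' ?_
    filter_upwards [eventually_atTop.mpr ⟨3, fun k hk => hk⟩] with k hk
    have hk1 : 1 ≤ k := by omega
    have hlogk : 1 < Real.log k := hlog1 k hk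
    have hSk : 0 < hopS k := hSpos k hk1
    have hHk : 0 < hopH k := lt_of_lt_of_le (by linarith) (hHlb k)
    have hll : 0 < Real.log (Real.log k) := Real.log_pos hlogk
    have hgain : hopGain k = G k + Real.log (Real.log k) := by
      have hGk : G k = Real.log ((hopS k)⁻¹) + Real.log (hopH k / Real.log k) - hopElogK k := rfl
      rw [hopGain, hopEK_eq, Real.log_mul (by positivity) (ne_of_gt hHk), hGk,
        Real.log_div (ne_of_gt hHk) (ne_of_gt (by linarith : (0:ℝ) < Real.log k))]
      ring
    rw [hgain, add_div, div_self (ne_of_gt hll)]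
  refine ⟨part1, ⟨A⁻¹, 2, by positivity, by norm_num, 3, part2⟩, ⟨A⁻¹ * B, part3⟩⟩
end

section
/- For each integer n ≥ 3 let π be the harmonic distribution π_l = κ_n/(l·log n) for l = 2,…,n, where κ_n = log n · ( Σ_{l=2}^n 1/l )^{−1} is the normalization constant, and let G(n) = ( Σ_{l=2}^n l·π_l ) · ( Σ_{l=2}^n π_l/l ). Then there exist constants c_1, c_2 > 0 and n_0 such that c_1 · n/(log n)² ≤ G(n) ≤ c_2 · n/(log n)² for all n ≥ n_0; moreover E[N] = Θ(n/log n) and E[1/N] = Θ(1/log n). -/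
open Finset

noncomputable def Hn (n : ℕ) : ℝ := ∑ j ∈ Finset.Icc 2 n, 1 / (j : ℝ)
noncomputable def Sn (n : ℕ) : ℝ := ∑ l ∈ Finset.Icc 2 n, ((l : ℝ) * l)⁻¹

lemma Hn_eq (n : ℕ) (hn : 1 ≤ n) : Hn n = (harmonic n : ℝ) - 1 := by
  have h : Finset.Icc 1 n = insert 1 (Finset.Icc 2 n) := by
    ext x; simp [Finset.mem_Icc]; omega
  have : (harmonic n : ℝ) = ∑ j ∈ Finset.Icc 1 n, (j : ℝ)⁻¹ := by
    rw [harmonic_eq_sum_Icc]; push_cast; ring_nf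
  rw [this, h, Finset.sum_insert (by simp)]
  simp [Hn, one_div]

lemma Hn_le (n : ℕ) (hn : 1 ≤ n) : Hn n ≤ Real.log n := by
  rw [Hn_eq n hn]
  have := harmonic_le_one_add_log n
  linarith

lemma le_Hn (n : ℕ) (hn : 1 ≤ n) : Real.log n - 1 ≤ Hn n := by
  rw [Hn_eq n hn]
  have h1 := log_add_one_le_harmonic n
  have h2 : Real.log n ≤ Real.log (n+1) := by
    apply Real.log_le_log (by positivity)
    push_cast; linarith
  push_cast at h1
  linarith

lemma Sn_le (n : ℕ) : Sn n ≤ 1 := by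
  have key : ∀ m : ℕ, 1 ≤ m → Sn m ≤ 1 - 1/(m:ℝ) := by
    intro m hm
    induction m with
    | zero => omega
    | succ k ih =>
      rcases Nat.eq_or_lt_of_le hm with h | h
      · simp [Sn, ← h, show Finset.Icc 2 1 = ∅ from rfl]
      · have hk : 1 ≤ k := by omega
        have hins : Finset.Icc 2 (k+1) = insert (k+1) (Finset.Icc 2 k) := by
          ext x; simp [Finset.mem_Icc]; omega
        have : Sn (k+1) = ((k+1:ℝ) * (k+1))⁻¹ + Sn k := by
          rw [Sn, hins, Finset.sum_insert (by simp [Finset.mem_Icc])]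
          push_cast; rfl
        rw [this]
        push_cast
        have ihk := ih hk
        have hkpos : (0:ℝ) < k := by exact_mod_cast hk
        have : ((k+1:ℝ) * (k+1))⁻¹ ≤ 1/(k:ℝ) - 1/(k+1:ℝ) := by
          rw [div_sub_div _ _ (ne_of_gt hkpos) (by positivity)]
          rw [inv_le_iff_one_le_mul₀ (by positivity)] at *
          rw [div_mul_eq_mul_div, le_div_iff₀ (by positivity)]
          ring_nf; nlinarith
        linarith
  rcases Nat.eq_zero_or_pos n with h | h
  · simp [Sn, h, show Finset.Icc 2 0 = ∅ from rfl]
  · have := key n h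
    have : (0:ℝ) ≤ 1/(n:ℝ) := by positivity
    linarith [key n h]

lemma le_Sn (n : ℕ) (hn : 2 ≤ n) : (1/4 : ℝ) ≤ Sn n := by
  have h2 : (2:ℕ) ∈ Finset.Icc 2 n := by simp [Finset.mem_Icc]; omega
  have := Finset.single_le_sum (f := fun l : ℕ => ((l:ℝ)*l)⁻¹)
    (fun i _ => by positivity) h2
  simpa [Sn] using le_trans (by norm_num) this



/-- The harmonic node-density distribution on `{2,…,n}`:
`π_l = κ_n/(l·log n)` with normalization `κ_n = log n · (∑_{j=2}^n 1/j)⁻¹`. -/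
noncomputable def harmPi (n l : ℕ) : ℝ :=
  (Real.log n * (∑ j ∈ Finset.Icc 2 n, 1 / (j : ℝ))⁻¹) / ((l : ℝ) * Real.log n)

/-- `E[N]` under the harmonic node-density distribution. -/
noncomputable def harmEN (n : ℕ) : ℝ := ∑ l ∈ Finset.Icc 2 n, (l : ℝ) * harmPi n l

/-- `E[1/N]` under the harmonic node-density distribution. -/
noncomputable def harmEinvN (n : ℕ) : ℝ := ∑ l ∈ Finset.Icc 2 n, harmPi n l / (l : ℝ)

lemma harmPi_eq (n l : ℕ) (hn : 2 ≤ n) (hl : 1 ≤ l) :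
    harmPi n l = (Hn n)⁻¹ / l := by
  have hlog : Real.log n ≠ 0 := by
    have : (1:ℝ) < n := by exact_mod_cast hn
    exact ne_of_gt (Real.log_pos this)
  have hl0 : (l:ℝ) ≠ 0 := by positivity
  rw [harmPi, ← Hn, mul_comm ((l:ℝ)) (Real.log n), mul_div_mul_left _ _ hlog]

lemma harmEN_eq (n : ℕ) (hn : 2 ≤ n) : harmEN n = ((n:ℝ) - 1) * (Hn n)⁻¹ := by
  rw [harmEN]
  have : ∀ l ∈ Finset.Icc 2 n, (l:ℝ) * harmPi n l = (Hn n)⁻¹ := by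
    intro l hl
    simp only [Finset.mem_Icc] at hl
    rw [harmPi_eq n l hn (by omega)]
    have hl0 : (l:ℝ) ≠ 0 := by
      have : 0 < l := by omega
      positivity
    rw [mul_comm, div_mul_cancel₀ _ hl0]
  rw [Finset.sum_congr rfl this, Finset.sum_const, Nat.card_Icc, nsmul_eq_mul]
  have : ((n + 1 - 2 : ℕ) : ℝ) = (n:ℝ) - 1 := by
    have h : n + 1 - 2 = n - 1 := by omega
    rw [h]; push_cast [Nat.cast_sub (by omega : 1 ≤ n)]; ring
  rw [this]

lemma harmEinvN_eq (n : ℕ) (hn : 2 ≤ n) : harmEinvN n = Sn n * (Hn n)⁻¹ := by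
  rw [harmEinvN, Sn, Finset.sum_mul]
  apply Finset.sum_congr rfl
  intro l hl
  simp only [Finset.mem_Icc] at hl
  rw [harmPi_eq n l hn (by omega)]
  rw [div_div, div_eq_mul_inv, mul_inv, mul_comm]

lemma main_bounds (n : ℕ) (hn : 8 ≤ n) :
    (1/2 : ℝ) * ((n:ℝ)/Real.log n) ≤ harmEN n ∧ harmEN n ≤ 2 * ((n:ℝ)/Real.log n) ∧
    (1/4 : ℝ)/Real.log n ≤ harmEinvN n ∧ harmEinvN n ≤ 2/Real.log n := by
  set L := Real.log n with hL
  have hn2 : 2 ≤ n := by omega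
  have hncast : (8:ℝ) ≤ (n:ℝ) := by exact_mod_cast hn
  have hL2 : (2:ℝ) ≤ L := by
    have h8 : Real.log 8 ≤ L := Real.log_le_log (by norm_num) hncast
    have h38 : Real.log 8 = 3 * Real.log 2 := by
      rw [show (8:ℝ) = 2^3 by norm_num, Real.log_pow]; push_cast; ring
    nlinarith [Real.log_two_gt_d9]
  have hLpos : (0:ℝ) < L := by linarith
  have hHle : Hn n ≤ L := Hn_le n (by omega)
  have hleH : L - 1 ≤ Hn n := le_Hn n (by omega)
  have hHpos : (0:ℝ) < Hn n := by linarith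
  have hH2 : L/2 ≤ Hn n := by linarith
  have hinv_le : (Hn n)⁻¹ ≤ 2/L := by
    rw [inv_le_iff_one_le_mul₀ hHpos]
    rw [div_mul_eq_mul_div, le_div_iff₀ hLpos]
    linarith
  have hle_inv : 1/L ≤ (Hn n)⁻¹ := by
    rw [one_div]
    exact inv_anti₀ hHpos hHle
  have hEN := harmEN_eq n hn2
  have hEinv := harmEinvN_eq n hn2
  have hSle := Sn_le n
  have hleS := le_Sn n hn2
  refine ⟨?_, ?_, ?_, ?_⟩
  · rw [hEN]
    have h1 : (1/2 : ℝ) * ((n:ℝ)/L) = ((n:ℝ)/2) * (1/L) := by ring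
    rw [h1]
    apply mul_le_mul (by linarith) hle_inv (by positivity) (by linarith)
  · rw [hEN]
    have h1 : (2:ℝ) * ((n:ℝ)/L) = (n:ℝ) * (2/L) := by ring
    rw [h1]
    apply mul_le_mul (by linarith) hinv_le (by positivity) (by linarith)
  · rw [hEinv]
    have h1 : (1/4 : ℝ)/L = (1/4) * (1/L) := by ring
    rw [h1]
    apply mul_le_mul hleS hle_inv (by positivity) (by linarith)
  · rw [hEinv]
    have h1 : (2:ℝ)/L = 1 * (2/L) := by ring
    rw [h1]
    exact mul_le_mul hSle hinv_le (by positivity) (by norm_num)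


/-- for the harmonic node-density distribution `π_l = κ_n/(l log n)`
on `{2,…,n}`, the randomness gain `G(n) = E[N]·E[1/N]` is `Θ(n/(log n)²)`;
moreover `E[N] = Θ(n/log n)` and `E[1/N] = Θ(1/log n)`. -/
theorem stmt18 :
    (∃ c₁ c₂ : ℝ, 0 < c₁ ∧ 0 < c₂ ∧ ∃ n₀ : ℕ, ∀ n : ℕ, n₀ ≤ n →
        c₁ * ((n : ℝ) / Real.log n ^ 2) ≤ harmEN n * harmEinvN n ∧
          harmEN n * harmEinvN n ≤ c₂ * ((n : ℝ) / Real.log n ^ 2)) ∧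
      (∃ d₁ d₂ : ℝ, 0 < d₁ ∧ 0 < d₂ ∧ ∃ n₁ : ℕ, ∀ n : ℕ, n₁ ≤ n →
        d₁ * ((n : ℝ) / Real.log n) ≤ harmEN n ∧
          harmEN n ≤ d₂ * ((n : ℝ) / Real.log n)) ∧
      (∃ e₁ e₂ : ℝ, 0 < e₁ ∧ 0 < e₂ ∧ ∃ n₂ : ℕ, ∀ n : ℕ, n₂ ≤ n →
        e₁ / Real.log n ≤ harmEinvN n ∧ harmEinvN n ≤ e₂ / Real.log n) := by
  refine ⟨⟨1/8, 4, by norm_num, by norm_num, 8, ?_⟩,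
    ⟨1/2, 2, by norm_num, by norm_num, 8, fun n hn => ⟨(main_bounds n hn).1, (main_bounds n hn).2.1⟩⟩,
    ⟨1/4, 2, by norm_num, by norm_num, 8, fun n hn => ⟨(main_bounds n hn).2.2.1, (main_bounds n hn).2.2.2⟩⟩⟩
  intro n hn
  obtain ⟨h1, h2, h3, h4⟩ := main_bounds n hn
  set L := Real.log n with hL
  have hLpos : (0:ℝ) < L := by
    have h1n : (1:ℝ) < n := by exact_mod_cast (by omega : 1 < n)
    exact Real.log_pos h1n
  have hnpos : (0:ℝ) ≤ (n:ℝ) := by positivity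
  constructor
  · have heq : (1/8 : ℝ) * ((n:ℝ)/L^2) = ((1/2)*((n:ℝ)/L)) * ((1/4)/L) := by
      rw [pow_two]; ring
    rw [heq]
    exact mul_le_mul h1 h3 (by positivity) (le_trans (by positivity) h1)
  · have heq : (4 : ℝ) * ((n:ℝ)/L^2) = (2*((n:ℝ)/L)) * (2/L) := by
      rw [pow_two]; ring
    rw [heq]
    exact mul_le_mul h2 h4 (le_trans (by positivity) h3) (by positivity)
end
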